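/- In the Weyl algebra A of the representation space of a simply-laced quiver, the commutator of the quantum comoment with a generator is: [μ̂*_i(Λ̂^i_{kl}), B̂_α^{qr}] = -δ_{ql}·B̂_α^{kr} and [μ̂*_i(Λ̂^i_{kl}), B̂_{α*}^{qr}] = δ_{kr}·B̂_{α*}^{ql}, for any arrow α with t(α) = i. Consequently μ̂* is a quantum comoment map for the base-changing action: [μ̂*(Λ), X̂] equals the infinitesimal conjugation action of the trace-dual of Λ on X̂. -/

import Mathlib

noncomputable section

/-- The quantum comoment element μ̂*_i(Λ̂^i_{kl}) at a node i of a simply-laced quiver. -/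
def quivMu {A : Type*} [Ring A] [Algebra ℂ A] {Ar : Type*} [Fintype Ar]
    {n : ℕ} {m : Ar → ℕ} (ε : Ar → ℂ)
    (Bin : (α : Ar) → Fin n → Fin (m α) → A)
    (Bout : (α : Ar) → Fin (m α) → Fin n → A) (k l : Fin n) : A :=
  (1 / 2 : ℂ) • ∑ α, ε α • ∑ mm, (Bin α k mm * Bout α mm l + Bout α mm l * Bin α k mm)

/-- The linear extension of e^i_{lk} ↦ μ̂*_i(Λ̂^i_{kl}) (trace duality) to gl(V_i). -/
def quivPhi {A : Type*} [Ring A] [Algebra ℂ A] {Ar : Type*} [Fintype Ar]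
    {n : ℕ} {m : Ar → ℕ} (ε : Ar → ℂ)
    (Bin : (α : Ar) → Fin n → Fin (m α) → A)
    (Bout : (α : Ar) → Fin (m α) → Fin n → A)
    (X : Matrix (Fin n) (Fin n) ℂ) : A :=
  ∑ k, ∑ l, X l k • quivMu ε Bin Bout k l

lemma pair_comm' {A : Type*} [Ring A] (a b c : A) (hac : a*c = c*a) :
    (a*b + b*a)*c - c*(a*b + b*a) = a*(b*c - c*b) + (b*c - c*b)*a := by
  have h1 : b*a*c = b*(c*a) := by rw [mul_assoc, hac]
  have h2 : c*(a*b) = a*c*b := by rw [← mul_assoc, ← hac]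
  rw [add_mul, mul_add, h1, h2]
  simp only [mul_assoc, mul_sub, sub_mul]
  abel

lemma mu_in {A : Type*} [Ring A] [Algebra ℂ A]
    {Ar : Type*} [Fintype Ar] {n : ℕ} {m : Ar → ℕ}
    (ε : Ar → ℂ) (hε : ∀ α, ε α ≠ 0)
    (Bin : (α : Ar) → Fin n → Fin (m α) → A)
    (Bout : (α : Ar) → Fin (m α) → Fin n → A)
    (hio : ∀ α (k : Fin n) (l : Fin (m α)) (k' : Fin (m α)) (l' : Fin n),
      Bin α k l * Bout α k' l' - Bout α k' l' * Bin α k l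
        = if l' = k ∧ k' = l then algebraMap ℂ A (ε α)⁻¹ else 0)
    (hio' : ∀ α β, α ≠ β → ∀ (k : Fin n) (l : Fin (m α)) (k' : Fin (m β)) (l' : Fin n),
      Bin α k l * Bout β k' l' = Bout β k' l' * Bin α k l)
    (hii : ∀ α β (k : Fin n) (l : Fin (m α)) (k' : Fin n) (l' : Fin (m β)),
      Bin α k l * Bin β k' l' = Bin β k' l' * Bin α k l)
    (k l : Fin n) (α : Ar) (q : Fin n) (r : Fin (m α)) :
      quivMu ε Bin Bout k l * Bin α q r - Bin α q r * quivMu ε Bin Bout k l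
        = if q = l then -Bin α k r else 0 := by
  unfold quivMu
  set x := Bin α q r with hx
  rw [smul_mul_assoc, mul_smul_comm, ← smul_sub, Finset.sum_mul, Finset.mul_sum,
    ← Finset.sum_sub_distrib]
  have expand : ∀ β, (ε β • ∑ mm, (Bin β k mm * Bout β mm l + Bout β mm l * Bin β k mm)) * x
      - x * (ε β • ∑ mm, (Bin β k mm * Bout β mm l + Bout β mm l * Bin β k mm))
      = ε β • ∑ mm, (Bin β k mm * (Bout β mm l * x - x * Bout β mm l)
          + (Bout β mm l * x - x * Bout β mm l) * Bin β k mm) := by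
    intro β
    rw [smul_mul_assoc, mul_smul_comm, ← smul_sub, Finset.sum_mul, Finset.mul_sum,
      ← Finset.sum_sub_distrib]
    congr 1
    apply Finset.sum_congr rfl
    intro mm _
    exact pair_comm' _ _ _ (hii β α k mm q r)
  simp only [expand]
  rw [Finset.sum_eq_single α]
  · have hD : ∀ mm : Fin (m α), Bout α mm l * x - x * Bout α mm l
        = if q = l ∧ mm = r then -(algebraMap ℂ A (ε α)⁻¹) else 0 := by
      intro mm
      have h := hio α q r mm l
      have : Bout α mm l * x - x * Bout α mm l
          = -(Bin α q r * Bout α mm l - Bout α mm l * Bin α q r) := (neg_sub _ _).symm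
      rw [this, h]
      by_cases h1 : q = l
      · by_cases h2 : mm = r <;> simp [h1, h2]
      · rw [if_neg (fun h' => h1 h'.1.symm), if_neg (fun h' => h1 h'.1), neg_zero]
    simp only [hD]
    by_cases hq : q = l
    · rw [if_pos hq]
      simp only [hq, true_and, mul_ite, ite_mul, mul_zero, zero_mul,
        Finset.sum_add_distrib, Finset.sum_ite_eq', Finset.mem_univ, if_pos]
      have h2 : Bin α k r * -((algebraMap ℂ A) (ε α)⁻¹) + -((algebraMap ℂ A) (ε α)⁻¹) * Bin α k r
          = (-(2*(ε α)⁻¹)) • Bin α k r := by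
        rw [mul_neg, neg_mul, ← Algebra.commutes, ← Algebra.smul_def]
        module
      rw [h2, smul_smul, smul_smul]
      have h3 : (1/2 : ℂ) * ε α * -(2*(ε α)⁻¹) = -1 := by
        field_simp
        rw [div_self (hε α)]
      rw [h3, neg_one_smul]
    · simp [hq]
  · intro β _ hβ
    have hcom : ∀ mm : Fin (m β), Bout β mm l * x - x * Bout β mm l = 0 := by
      intro mm
      rw [hx, ← hio' α β (fun h => hβ h.symm) q r mm l, sub_self]
    simp [hcom]
  · simp

lemma mu_out {A : Type*} [Ring A] [Algebra ℂ A]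
    {Ar : Type*} [Fintype Ar] {n : ℕ} {m : Ar → ℕ}
    (ε : Ar → ℂ) (hε : ∀ α, ε α ≠ 0)
    (Bin : (α : Ar) → Fin n → Fin (m α) → A)
    (Bout : (α : Ar) → Fin (m α) → Fin n → A)
    (hio : ∀ α (k : Fin n) (l : Fin (m α)) (k' : Fin (m α)) (l' : Fin n),
      Bin α k l * Bout α k' l' - Bout α k' l' * Bin α k l
        = if l' = k ∧ k' = l then algebraMap ℂ A (ε α)⁻¹ else 0)
    (hio' : ∀ α β, α ≠ β → ∀ (k : Fin n) (l : Fin (m α)) (k' : Fin (m β)) (l' : Fin n),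
      Bin α k l * Bout β k' l' = Bout β k' l' * Bin α k l)
    (hoo : ∀ α β (k : Fin (m α)) (l : Fin n) (k' : Fin (m β)) (l' : Fin n),
      Bout α k l * Bout β k' l' = Bout β k' l' * Bout α k l)
    (k l : Fin n) (α : Ar) (q : Fin (m α)) (r : Fin n) :
      quivMu ε Bin Bout k l * Bout α q r - Bout α q r * quivMu ε Bin Bout k l
        = if r = k then Bout α q l else 0 := by
  unfold quivMu
  set x := Bout α q r with hx
  rw [smul_mul_assoc, mul_smul_comm, ← smul_sub, Finset.sum_mul, Finset.mul_sum,
    ← Finset.sum_sub_distrib]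
  have expand : ∀ β, (ε β • ∑ mm, (Bin β k mm * Bout β mm l + Bout β mm l * Bin β k mm)) * x
      - x * (ε β • ∑ mm, (Bin β k mm * Bout β mm l + Bout β mm l * Bin β k mm))
      = ε β • ∑ mm, (Bout β mm l * (Bin β k mm * x - x * Bin β k mm)
          + (Bin β k mm * x - x * Bin β k mm) * Bout β mm l) := by
    intro β
    rw [smul_mul_assoc, mul_smul_comm, ← smul_sub, Finset.sum_mul, Finset.mul_sum,
      ← Finset.sum_sub_distrib]
    congr 1
    apply Finset.sum_congr rfl
    intro mm _
    have hcomm : Bin β k mm * Bout β mm l + Bout β mm l * Bin β k mm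
        = Bout β mm l * Bin β k mm + Bin β k mm * Bout β mm l := by rw [add_comm]
    rw [hcomm]
    exact pair_comm' _ _ _ (hoo β α mm l q r)
  simp only [expand]
  rw [Finset.sum_eq_single α]
  · have hD : ∀ mm : Fin (m α), Bin α k mm * x - x * Bin α k mm
        = if r = k ∧ q = mm then algebraMap ℂ A (ε α)⁻¹ else 0 := by
      intro mm
      rw [hx]
      exact hio α k mm q r
    simp only [hD]
    by_cases hr : r = k
    · rw [if_pos hr]
      simp only [hr, true_and, mul_ite, ite_mul, mul_zero, zero_mul,
        Finset.sum_add_distrib, Finset.sum_ite_eq, Finset.mem_univ, if_pos]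
      have h2 : Bout α q l * (algebraMap ℂ A) (ε α)⁻¹ + (algebraMap ℂ A) (ε α)⁻¹ * Bout α q l
          = ((2*(ε α)⁻¹)) • Bout α q l := by
        rw [← Algebra.commutes, ← Algebra.smul_def]
        module
      rw [h2, smul_smul, smul_smul]
      have h3 : (1/2 : ℂ) * ε α * (2*(ε α)⁻¹) = 1 := by
        field_simp
        exact div_self (hε α)
      rw [h3, one_smul]
    · simp [hr]
  · intro β _ hβ
    have hcom : ∀ mm : Fin (m β), Bin β k mm * x - x * Bin β k mm = 0 := by
      intro mm
      rw [hx, hio' β α hβ k mm q r, sub_self]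
    simp [hcom]
  · simp

/-- Commutators of the quantum comoment with the Weyl generators:
[μ̂*_i(Λ̂^i_{kl}), B̂_α^{qr}] = -δ_{ql}·B̂_α^{kr} and
[μ̂*_i(Λ̂^i_{kl}), B̂_{α*}^{qr}] = δ_{kr}·B̂_{α*}^{ql} for any arrow α with t(α) = i;
consequently [μ̂*(Λ), X̂] is the infinitesimal conjugation action of the trace-dual
of Λ on the matrices of generators. -/
theorem stmt11 {A : Type*} [Ring A] [Algebra ℂ A]
    {Ar : Type*} [Fintype Ar] {n : ℕ} {m : Ar → ℕ}
    (ε : Ar → ℂ) (hε : ∀ α, ε α ≠ 0)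
    (Bin : (α : Ar) → Fin n → Fin (m α) → A)
    (Bout : (α : Ar) → Fin (m α) → Fin n → A)
    (hio : ∀ α (k : Fin n) (l : Fin (m α)) (k' : Fin (m α)) (l' : Fin n),
      Bin α k l * Bout α k' l' - Bout α k' l' * Bin α k l
        = if l' = k ∧ k' = l then algebraMap ℂ A (ε α)⁻¹ else 0)
    (hio' : ∀ α β, α ≠ β → ∀ (k : Fin n) (l : Fin (m α)) (k' : Fin (m β)) (l' : Fin n),
      Bin α k l * Bout β k' l' = Bout β k' l' * Bin α k l)
    (hii : ∀ α β (k : Fin n) (l : Fin (m α)) (k' : Fin n) (l' : Fin (m β)),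
      Bin α k l * Bin β k' l' = Bin β k' l' * Bin α k l)
    (hoo : ∀ α β (k : Fin (m α)) (l : Fin n) (k' : Fin (m β)) (l' : Fin n),
      Bout α k l * Bout β k' l' = Bout β k' l' * Bout α k l) :
    (∀ (k l : Fin n) (α : Ar) (q : Fin n) (r : Fin (m α)),
      quivMu ε Bin Bout k l * Bin α q r - Bin α q r * quivMu ε Bin Bout k l
        = if q = l then -Bin α k r else 0) ∧
    (∀ (k l : Fin n) (α : Ar) (q : Fin (m α)) (r : Fin n),
      quivMu ε Bin Bout k l * Bout α q r - Bout α q r * quivMu ε Bin Bout k l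
        = if r = k then Bout α q l else 0) ∧
    (∀ (X : Matrix (Fin n) (Fin n) ℂ) (α : Ar) (q : Fin n) (r : Fin (m α)),
      quivPhi ε Bin Bout X * Bin α q r - Bin α q r * quivPhi ε Bin Bout X
        = -∑ k, X q k • Bin α k r) ∧
    (∀ (X : Matrix (Fin n) (Fin n) ℂ) (α : Ar) (q : Fin (m α)) (r : Fin n),
      quivPhi ε Bin Bout X * Bout α q r - Bout α q r * quivPhi ε Bin Bout X
        = ∑ k, X k r • Bout α q k) := by
  refine ⟨mu_in ε hε Bin Bout hio hio' hii, mu_out ε hε Bin Bout hio hio' hoo, ?_, ?_⟩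
  · intro X α q r
    unfold quivPhi
    rw [Finset.sum_mul, Finset.mul_sum, ← Finset.sum_sub_distrib]
    have : ∀ k : Fin n, (∑ l, X l k • quivMu ε Bin Bout k l) * Bin α q r
        - Bin α q r * ∑ l, X l k • quivMu ε Bin Bout k l
        = ∑ l, X l k • (quivMu ε Bin Bout k l * Bin α q r
            - Bin α q r * quivMu ε Bin Bout k l) := by
      intro kk
      rw [Finset.sum_mul, Finset.mul_sum, ← Finset.sum_sub_distrib]
      simp only [smul_mul_assoc, mul_smul_comm, smul_sub]
    simp only [this, mu_in ε hε Bin Bout hio hio' hii, smul_ite, smul_zero,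
      Finset.sum_ite_eq, Finset.mem_univ, if_pos, smul_neg]
    rw [← Finset.sum_neg_distrib]
  · intro X α q r
    unfold quivPhi
    rw [Finset.sum_mul, Finset.mul_sum, ← Finset.sum_sub_distrib]
    have : ∀ k : Fin n, (∑ l, X l k • quivMu ε Bin Bout k l) * Bout α q r
        - Bout α q r * ∑ l, X l k • quivMu ε Bin Bout k l
        = ∑ l, X l k • (quivMu ε Bin Bout k l * Bout α q r
            - Bout α q r * quivMu ε Bin Bout k l) := by
      intro kk
      rw [Finset.sum_mul, Finset.mul_sum, ← Finset.sum_sub_distrib]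
      simp only [smul_mul_assoc, mul_smul_comm, smul_sub]
    simp only [this, mu_out ε hε Bin Bout hio hio' hoo, smul_ite, smul_zero]
    rw [Finset.sum_comm]
    simp [Finset.sum_ite_eq]
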